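/- Let P be the simplicial poset obtained by gluing two d-simplices along their boundaries (d ≥ 1). Then for every atom y of P, the restriction P|_{V∖{y}} has rank strictly less than rank P = d + 1; consequently P is not 2-Cohen–Macaulay, even though the underlying space of Γ(P) is the d-sphere. -/

import Mathlib

open MvPolynomial Finset
open scoped Classical
set_option linter.unusedSectionVars false
set_option maxHeartbeats 1000000
set_option synthInstance.maxHeartbeats 400000

noncomputable section

def chi {ι : Type} [DecidableEq ι] (F : Finset ι) : ι → ℕ := fun j => if j ∈ F then 1 else 0
def mon (k : Type) [Field k] {ι : Type} [Fintype ι] (b : ι → ℕ) : MvPolynomial ι k :=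
  ∏ j, (X j : MvPolynomial ι k) ^ (b j)

structure GradedMod (k : Type) [Field k] (ι : Type) [Fintype ι] [DecidableEq ι] where
  carrier : Type
  [acg : AddCommGroup carrier]
  [modS : Module (MvPolynomial ι k) carrier]
  [modk : Module k carrier]
  [tower : IsScalarTower k (MvPolynomial ι k) carrier]
  deg : (ι → ℕ) → Submodule k carrier
  internal : DirectSum.IsInternal deg
  mul_mem : ∀ (j : ι) (a : ι → ℕ) (x : carrier), x ∈ deg a →
      (X j : MvPolynomial ι k) • x ∈ deg (a + Pi.single j 1)
  finite : Module.Finite (MvPolynomial ι k) carrier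

attribute [instance] GradedMod.acg GradedMod.modS GradedMod.modk GradedMod.tower

namespace GradedMod

variable {k : Type} [Field k] {ι : Type} [Fintype ι] [DecidableEq ι]

lemma mon_zero : mon k (0 : ι → ℕ) = 1 := by simp [mon]

lemma mon_add (a b : ι → ℕ) : mon k (a + b) = mon k a * mon k b := by
  simp [mon, pow_add, Finset.prod_mul_distrib]

lemma mon_single (j : ι) : mon k (Pi.single j 1 : ι → ℕ) = X j := by
  rw [mon, Finset.prod_eq_single j]
  · simp
  · intro b _ hb; rw [Pi.single_eq_of_ne hb]; simp
  · intro h; exact absurd (Finset.mem_univ j) h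

lemma smul_comm_k (M : GradedMod k ι) (p : MvPolynomial ι k) (c : k) (x : M.carrier) :
    p • (c • x) = c • (p • x) := by
  rw [← IsScalarTower.algebraMap_smul (MvPolynomial ι k) c x, smul_smul, mul_comm,
    ← smul_smul, IsScalarTower.algebraMap_smul]

lemma mon_smul_mem (M : GradedMod k ι) :
    ∀ (n : ℕ) (b a : ι → ℕ), ∑ j, b j = n → ∀ x ∈ M.deg a, mon k b • x ∈ M.deg (a + b) := by
  intro n
  induction n with
  | zero =>
    intro b a hb x hx
    have hb0 : b = 0 := by
      funext j
      have := (Finset.sum_eq_zero_iff).1 hb j (Finset.mem_univ j)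
      simpa using this
    subst hb0
    simpa [mon_zero] using hx
  | succ m ih =>
    intro b a hb x hx
    obtain ⟨j, hj⟩ : ∃ j, b j ≠ 0 := by
      by_contra hc
      push_neg at hc
      rw [Finset.sum_eq_zero fun j _ => hc j] at hb
      exact Nat.succ_ne_zero m hb.symm
    set b' := Function.update b j (b j - 1) with hb'
    have hbb : b = b' + Pi.single j 1 := by
      funext i
      by_cases hij : i = j
      · subst hij
        simp only [Pi.add_apply, hb', Function.update_self, Pi.single_eq_same]
        omega
      · simp [hb', Function.update_of_ne hij, Pi.single_eq_of_ne hij]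
    have hsum : ∑ i, b' i = m := by
      have h1 : ∑ i, b i = (∑ i, b' i) + ∑ i, (Pi.single j 1 : ι → ℕ) i := by
        rw [← Finset.sum_add_distrib]; rw [hbb]; rfl
      have h2 : ∑ i, (Pi.single j 1 : ι → ℕ) i = 1 := by
        simp [Finset.sum_pi_single']
      omega
    have h1 := ih b' a hsum x hx
    have h2 := M.mul_mem j (a + b') _ h1
    have h3 : mon k b • x = (X j : MvPolynomial ι k) • (mon k b' • x) := by
      rw [hbb, mon_add, mon_single, smul_smul, mul_comm]
    rw [h3, hbb, ← add_assoc]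
    exact h2

end GradedMod

namespace GradedMod
variable {k : Type} [Field k] {ι : Type} [Fintype ι] [DecidableEq ι]

/-- Yanagawa's squarefreeness condition: multiplication by `x^b` is a bijection
`M_a → M_{a+b}` whenever `supp b ⊆ supp a`. -/
def IsSquarefree (M : GradedMod k ι) : Prop :=
  ∀ a b : ι → ℕ, (∀ j, b j ≠ 0 → a j ≠ 0) →
    Set.BijOn (fun x : M.carrier => mon k b • x) (M.deg a) (M.deg (a + b))

lemma chi_insert {ℓ : ι} {F : Finset ι} (h : ℓ ∉ F) :
    chi (insert ℓ F) = chi F + Pi.single ℓ 1 := by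
  funext j
  by_cases hj : j = ℓ
  · subst hj; simp [chi, h, Pi.single_eq_same]
  · simp [chi, hj, Pi.single_eq_of_ne hj]

lemma chi_sdiff {F G : Finset ι} (h : F ⊆ G) : chi F + chi (G \ F) = chi G := by
  funext j
  by_cases hF : j ∈ F
  · simp [chi, hF, h hF, Finset.mem_sdiff]
  · by_cases hG : j ∈ G <;> simp [chi, hF, hG, Finset.mem_sdiff]

/-- Multiplication by the variable `x_ℓ` as a `k`-linear map on squarefree graded pieces. -/
def multMap (M : GradedMod k ι) (ℓ : ι) (F : Finset ι) (h : ℓ ∉ F) :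
    M.deg (chi F) →ₗ[k] M.deg (chi (insert ℓ F)) where
  toFun x := ⟨(X ℓ : MvPolynomial ι k) • (x : M.carrier), by
    have h1 := M.mul_mem ℓ (chi F) x.1 x.2
    rw [chi_insert h]; exact h1⟩
  map_add' x y := by ext; simp [smul_add]
  map_smul' c x := by
    ext
    have h1 : ((c • x : M.deg (chi F)) : M.carrier) = c • (x : M.carrier) := rfl
    simp only [RingHom.id_apply, SetLike.val_smul, h1]
    exact M.smul_comm_k _ c _

end GradedMod

/-- A "combinatorial squarefree module": a family of `k`-vector spaces indexed by the
squarefree degrees `F ⊆ ι` together with the multiplication maps `x^{G∖F} : M_F → M_G`. -/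
structure CombSqMod (k : Type) [Field k] (ι : Type) [Fintype ι] [DecidableEq ι] where
  piece : Finset ι → Type
  [acg : ∀ F, AddCommGroup (piece F)]
  [modk : ∀ F, Module k (piece F)]
  mult : ∀ (F G : Finset ι), F ⊆ G → (piece F →ₗ[k] piece G)

attribute [instance] CombSqMod.acg CombSqMod.modk

namespace CombSqMod

variable {k : Type} [Field k] {ι : Type} [Fintype ι] [DecidableEq ι]

/-- Index set of the degree-`F` strand of the Koszul complex on the variables in `W`. -/
abbrev kIdx (W F : Finset ι) (j : ℕ) : Type := {E : Finset ι // E ⊆ W ∧ E ⊆ F ∧ E.card = j}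

/-- Terms of the degree-`F` strand of the Koszul complex of `N` over `k[xⱼ : j ∈ W]`. -/
abbrev kSpace (N : CombSqMod k ι) (W F : Finset ι) (j : ℕ) : Type :=
  ∀ E : kIdx W F j, N.piece (F \ E.1)

/-- Koszul sign (with respect to a fixed enumeration of the variables). -/
def ksign (E : Finset ι) (ℓ : ι) : ℤ :=
  (-1 : ℤ) ^ (E.filter fun j => Fintype.equivFin ι j < Fintype.equivFin ι ℓ).card

/-- The Koszul differential (degree-`F` strand, variables in `W`). -/
def kd (N : CombSqMod k ι) (W F : Finset ι) (j : ℕ) :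
    kSpace N W F (j + 1) →ₗ[k] kSpace N W F j :=
  LinearMap.pi fun E' =>
    ∑ ℓ ∈ ((F ∩ W) \ E'.1).attach,
      ksign E'.1 ℓ.1 •
        ((N.mult (F \ insert ℓ.1 E'.1) (F \ E'.1)
            (Finset.sdiff_subset_sdiff (Finset.Subset.refl F) (Finset.subset_insert ℓ.1 E'.1))).comp
          (LinearMap.proj (⟨insert ℓ.1 E'.1, by
              have h := ℓ.2
              simp only [Finset.mem_sdiff, Finset.mem_inter] at h
              exact ⟨Finset.insert_subset h.1.2 E'.2.1, Finset.insert_subset h.1.1 E'.2.2.1,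
                by rw [Finset.card_insert_of_notMem h.2, E'.2.2.2]⟩⟩ : kIdx W F (j + 1))))

/-- Cycles of the Koszul complex. -/
def kcycles (N : CombSqMod k ι) (W F : Finset ι) : (i : ℕ) → Submodule k (kSpace N W F i)
  | 0 => ⊤
  | (j + 1) => LinearMap.ker (kd N W F j)

/-- The graded Betti number `β_{i,F}` of `N` over `k[xⱼ : j ∈ W]`, defined (as usual, for
squarefree degrees) as the `k`-dimension of the degree-`F` part of the `i`-th Koszul homology,
i.e. of `[Tor_i(k, N)]_F`. -/
def bettiNum (N : CombSqMod k ι) (W : Finset ι) (i : ℕ) (F : Finset ι) : ℕ :=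
  Module.finrank k
    (↥(kcycles N W F i) ⧸
      (Submodule.comap (kcycles N W F i).subtype (LinearMap.range (kd N W F i))))

/-- The (Krull) dimension of the restriction `N|_W`: for squarefree modules this is the
maximal cardinality of a face `F ⊆ W` with nonvanishing piece. -/
def combDim (N : CombSqMod k ι) (W : Finset ι) : ℕ :=
  Finset.sup (W.powerset.filter fun F => Nontrivial (N.piece F)) Finset.card

/-- `N|_W` is a Cohen–Macaulay module of dimension `d` over `k[xⱼ : j ∈ W]`
(via the Auslander–Buchsbaum characterization: `β_{i,F} = 0` for `i > #W − d`). -/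
def IsCMon (N : CombSqMod k ι) (W : Finset ι) (d : ℕ) : Prop :=
  combDim N W = d ∧
    ∀ (i : ℕ) (F : Finset ι), F ⊆ W → (W.card : ℤ) - d < i → bettiNum N W i F = 0

/-- The restriction `N|_W` is the zero module. -/
def IsZeroOn (N : CombSqMod k ι) (W : Finset ι) : Prop :=
  ∀ F : Finset ι, F ⊆ W → Subsingleton (N.piece F)

/-- `N` is `l`-Cohen–Macaulay: for every `W` with `#W < l`, the restriction of `N` away
from `W` is zero or Cohen–Macaulay of the same dimension as `N`. -/
def lCM (N : CombSqMod k ι) (l : ℕ) : Prop :=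
  ∀ W : Finset ι, W.card < l →
    IsZeroOn N Wᶜ ∨ IsCMon N Wᶜ (combDim N Finset.univ)

/-- `N` is generated by its degree-`0` part. -/
def GenByDeg0 (N : CombSqMod k ι) : Prop :=
  ∀ G : Finset ι, Function.Surjective (N.mult ∅ G (Finset.empty_subset G))

end CombSqMod

namespace GradedMod

variable {k : Type} [Field k] {ι : Type} [Fintype ι] [DecidableEq ι]

/-- The combinatorial squarefree module underlying a graded module: pieces are the
squarefree graded components `M_F := M_{χ_F}` and the maps are multiplication by
`x^{G ∖ F}`. -/
def toComb (M : GradedMod k ι) : CombSqMod k ι where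
  piece F := M.deg (chi F)
  mult F G hFG :=
    { toFun := fun x => ⟨mon k (chi (G \ F)) • x.1, by
        have h1 := M.mon_smul_mem (∑ j, chi (G \ F) j) (chi (G \ F)) (chi F) rfl x.1 x.2
        rwa [chi_sdiff hFG] at h1⟩
      map_add' := fun x y => by ext; simp [smul_add]
      map_smul' := fun c x => by
        ext
        have h1 : ((c • x : M.deg (chi F)) : M.carrier) = c • (x : M.carrier) := rfl
        simp only [RingHom.id_apply, SetLike.val_smul, h1]
        exact M.smul_comm_k _ c _ }



/-- The graded Betti numbers `β_{i,F}^S(M)` of `M` over `S = k[xⱼ : j ∈ ι]`. -/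
def betti (M : GradedMod k ι) (i : ℕ) (F : Finset ι) : ℕ :=
  CombSqMod.bettiNum M.toComb Finset.univ i F

/-- The Krull dimension of `M` (for squarefree modules: the largest size of a face with
nonzero component). -/
def dim (M : GradedMod k ι) : ℕ := CombSqMod.combDim M.toComb Finset.univ

/-- `M` is a Cohen–Macaulay module of dimension `d`. -/
def IsCMdim (M : GradedMod k ι) (d : ℕ) : Prop := CombSqMod.IsCMon M.toComb Finset.univ d

/-- `M` is `l`-Cohen–Macaulay. -/
def lCM (M : GradedMod k ι) (l : ℕ) : Prop := CombSqMod.lCM M.toComb l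

end GradedMod

/-- The "Stanley–Reisner" combinatorial squarefree module of a simplicial complex `Δ` on
the vertex set `ι`: the piece at a face `F ∈ Δ` is `k`, and zero at non-faces; the
multiplication maps are identities between faces and zero otherwise. -/
def SRComb (k : Type) [Field k] {ι : Type} [Fintype ι] [DecidableEq ι]
    (Δ : Finset (Finset ι)) : CombSqMod k ι where
  piece F := ↥(if F ∈ Δ then (⊤ : Submodule k k) else ⊥)
  mult F G _hFG :=
    { toFun := fun x => ⟨if G ∈ Δ then (x : k) else 0, by
        split_ifs with h <;> first | exact Submodule.mem_top | exact Submodule.zero_mem _⟩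
      map_add' := fun x y => by
        ext
        simp only [Submodule.coe_add]
        split_ifs <;> simp
      map_smul' := fun c x => by
        ext
        simp only [RingHom.id_apply, SetLike.val_smul, smul_eq_mul]
        split_ifs <;> simp }

section Posets

variable {P : Type} [Fintype P] [PartialOrder P] [OrderBot P]

/-- A finite poset `P` with least element `0̂ = ⊥` is *simplicial* if every interval
`[0̂, x]` is isomorphic to a Boolean algebra. -/
def IsSimplicialPoset (P : Type) [Fintype P] [PartialOrder P] [OrderBot P] : Prop :=
  ∀ x : P, ∃ m : ℕ, Nonempty ({y : P // y ≤ x} ≃o Finset (Fin m))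

/-- The rank `ρ(x)`: the number of atoms below `x`. -/
def rho (x : P) : ℕ := (Finset.univ.filter fun y : P => IsAtom y ∧ y ≤ x).card

/-- The rank of a subposet `S ⊆ P` (for a simplicial poset: the maximum of `ρ` on `S`). -/
def posetRank (S : Set P) : ℕ :=
  (Finset.univ.filter fun x : P => x ∈ S).sup rho

/-- The order complex of `S ∖ {⊥}`: chains of nonbottom elements of `S`.  Its geometric
realization is the barycentric subdivision of the cell complex `Γ(P)` restricted to `S`. -/
def orderComplex (S : Set P) : Finset (Finset P) :=
  Finset.univ.filter fun F : Finset P =>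
    (∀ x ∈ F, x ∈ S ∧ x ≠ ⊥) ∧ ∀ x ∈ F, ∀ y ∈ F, x ≤ y ∨ y ≤ x

/-- A subposet `S` of a simplicial poset is *Cohen–Macaulay over `k`* if the
Stanley–Reisner module of (a simplicial decomposition of the cell complex `Γ`, namely) its
order complex is a Cohen–Macaulay module of dimension `rank S` over the polynomial ring
on the vertex set. -/
def IsCMPoset (k : Type) [Field k] (S : Set P) : Prop :=
  CombSqMod.IsCMon (SRComb k (orderComplex S)) Finset.univ (posetRank S)

/-- The restriction `P|_{V∖W}` (inside `S`): elements all of whose atoms avoid `W`. -/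
def restrictAway (S : Set P) (W : Finset P) : Set P :=
  {x | x ∈ S ∧ ∀ y : P, IsAtom y → y ≤ x → y ∉ W}

/-- `S` is `l`-Cohen–Macaulay over `k`: for every set `W` of at most `l − 1` atoms, the
restriction `S|_{V∖W}` is Cohen–Macaulay of the same rank as `S`. -/
def IslCMPoset (k : Type) [Field k] (S : Set P) (l : ℕ) : Prop :=
  ∀ W : Finset P, (↑W ⊆ {y : P | IsAtom y ∧ y ∈ S}) → W.card < l →
    IsCMPoset k (restrictAway S W) ∧ posetRank (restrictAway S W) = posetRank S

end Posets

/-! **Statement 17** (two `d`-simplices glued along their boundaries).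
Let `P` be the simplicial poset obtained by gluing two `d`-simplices (`d ≥ 1`) along
their boundaries: `P` is a simplicial poset of rank `d + 1` with exactly `d + 1` atoms,
having (at least) two maximal elements, in which every maximal element lies above all the
atoms.  Then for every atom `y`, the restriction `P|_{V∖{y}}` has rank strictly smaller
than `rank P = d + 1`; consequently `P` is not 2-Cohen–Macaulay (even though the
underlying space of `Γ(P)` is the `d`-sphere). -/
theorem glued_simplices_not_twoCM
    (k : Type) [Field k] {P : Type} [Fintype P] [PartialOrder P] [OrderBot P]
    (hP : IsSimplicialPoset P) (d : ℕ) (hd1 : 1 ≤ d)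
    (hatoms : (Finset.univ.filter fun y : P => IsAtom y).card = d + 1)
    (hrank : posetRank (Set.univ : Set P) = d + 1)
    (htwo : ∃ m₁ m₂ : P, m₁ ≠ m₂ ∧ (∀ z, m₁ ≤ z → z = m₁) ∧ (∀ z, m₂ ≤ z → z = m₂))
    (hmax : ∀ x : P, (∀ z, x ≤ z → z = x) → ∀ y : P, IsAtom y → y ≤ x) :
    (∀ y : P, IsAtom y →
        posetRank (restrictAway (Set.univ : Set P) {y}) < d + 1) ∧
      ¬ IslCMPoset k (Set.univ : Set P) 2 := by
  have hlt : ∀ y : P, IsAtom y →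
      posetRank (restrictAway (Set.univ : Set P) {y}) < d + 1 := by
    intro y hy
    apply Nat.lt_succ_of_le
    apply Finset.sup_le
    intro x hx
    simp only [Finset.mem_filter] at hx
    have hmem : x ∈ restrictAway (Set.univ : Set P) {y} := hx.2
    have hyx : ¬ y ≤ x := fun h => hmem.2 y hy h (Finset.mem_singleton_self y)
    have hsub : (Finset.univ.filter fun z : P => IsAtom z ∧ z ≤ x) ⊆
        (Finset.univ.filter fun z : P => IsAtom z).erase y := by
      intro z hz
      simp only [Finset.mem_filter, Finset.mem_erase, Finset.mem_univ, true_and] at hz ⊢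
      exact ⟨fun h => hyx (h ▸ hz.2), hz.1⟩
    have := Finset.card_le_card hsub
    have hcard := Finset.card_erase_of_mem (by
      simp only [Finset.mem_filter, Finset.mem_univ, true_and]; exact hy :
      y ∈ Finset.univ.filter fun z : P => IsAtom z)
    rw [hcard, hatoms] at this
    simpa [rho] using this
  refine ⟨hlt, fun h => ?_⟩
  obtain ⟨y, hy⟩ : ∃ y : P, IsAtom y := by
    have : 0 < (Finset.univ.filter fun y : P => IsAtom y).card := by omega
    obtain ⟨y, hy⟩ := Finset.card_pos.mp this
    exact ⟨y, (Finset.mem_filter.mp hy).2⟩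
  have h2 := h {y} (by
    intro z hz
    simp only [Finset.coe_singleton, Set.mem_singleton_iff] at hz
    subst hz
    exact ⟨hy, trivial⟩) (by norm_num)
  have := hlt y hy
  rw [h2.2, hrank] at this
  exact lt_irrefl _ this
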